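/- The continuous autocorrelation of the OFDM-modulated Zadoff–Chu signal equals the Dirichlet kernel: (1/T)∫₀^T x_u(t)·conj(x_u(t+τ)) dt = (1/N) Σ_{k=−N₀}^{N₀} exp(-2πi kτ/T), which equals 1 when τ/T ∈ ℤ and sin(πNτ/T)/(N sin(πτ/T)) otherwise. -/

import Mathlib

open Complex Classical

lemma aux_int_exp (T : ℝ) (hT : 0 < T) (m : ℤ) :
    (∫ t in (0:ℝ)..T, Complex.exp (2 * (Real.pi:ℂ) * Complex.I * (m:ℂ) * (t:ℂ) / T))
      = if m = 0 then (T:ℂ) else 0 := by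
  have hT0 : (T:ℂ) ≠ 0 := by exact_mod_cast hT.ne'
  rcases eq_or_ne m 0 with h | h
  · simp [h]
  · have hc : (2 * (Real.pi:ℂ) * Complex.I * (m:ℂ) / T) ≠ 0 := by
      apply div_ne_zero _ hT0
      simp [Real.pi_ne_zero, Complex.I_ne_zero, h, Complex.ofReal_ne_zero]
    have he : ∀ t : ℝ, 2 * (Real.pi:ℂ) * Complex.I * (m:ℂ) * (t:ℂ) / T
        = (2 * (Real.pi:ℂ) * Complex.I * (m:ℂ) / T) * (t:ℂ) := by intro t; ring
    rw [if_neg h]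
    simp_rw [he]
    rw [integral_exp_mul_complex hc]
    have h2 : (2 * (Real.pi:ℂ) * Complex.I * (m:ℂ) / T) * (T:ℂ)
        = (m:ℂ) * (2 * Real.pi * Complex.I) := by field_simp
    rw [h2, Complex.exp_int_mul_two_pi_mul_I]
    simp

lemma aux_corr (N : ℕ) (N₀ : ℕ) (hNpos : 0 < N) (T : ℝ) (hT : 0 < T) (X : ℤ → ℂ)
    (hXmod : ∀ k : ℤ, X k * (starRingEnd ℂ) (X k) = (N:ℂ))
    (f : ℝ → ℂ)
    (hf : ∀ t : ℝ, f t = (1 / (N : ℂ)) * ∑ k ∈ Finset.Icc (-(N₀ : ℤ)) (N₀ : ℤ),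
      X k * Complex.exp (2 * (Real.pi : ℂ) * Complex.I * (k : ℂ) * (t : ℂ) / T))
    (τ : ℝ) :
    (1 / (T : ℂ)) * (∫ t in (0 : ℝ)..T, f t * (starRingEnd ℂ) (f (t + τ)))
        = (1 / (N : ℂ)) * ∑ k ∈ Finset.Icc (-(N₀ : ℤ)) (N₀ : ℤ),
            Complex.exp (-(2 * (Real.pi : ℂ) * Complex.I * (k : ℂ) * (τ : ℂ) / T)) := by
  have hT0c : (T:ℂ) ≠ 0 := by exact_mod_cast hT.ne'
  have hN0 : (N:ℂ) ≠ 0 := by exact_mod_cast hNpos.ne'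
  set S := Finset.Icc (-(N₀ : ℤ)) (N₀ : ℤ) with hS
  have hptwise : ∀ t : ℝ, f t * (starRingEnd ℂ) (f (t + τ))
      = ∑ k ∈ S, ∑ l ∈ S,
          (1/(N:ℂ)) * (1/(N:ℂ)) * (X k * (starRingEnd ℂ) (X l)
            * Complex.exp (-(2 * (Real.pi : ℂ) * Complex.I * (l : ℂ) * (τ : ℂ) / T)))
          * Complex.exp (2 * (Real.pi:ℂ) * Complex.I * (((k - l : ℤ)):ℂ) * (t:ℂ) / T) := by
    intro t
    rw [hf t, hf (t + τ), map_mul, map_sum, mul_mul_mul_comm, Finset.sum_mul_sum,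
      Finset.mul_sum]
    refine Finset.sum_congr rfl fun k _ => ?_
    rw [Finset.mul_sum]
    refine Finset.sum_congr rfl fun l _ => ?_
    have hc1 : (starRingEnd ℂ) (1/(N:ℂ)) = 1/(N:ℂ) := by simp
    have hc2 : (starRingEnd ℂ) (X l * Complex.exp (2 * (Real.pi : ℂ) * Complex.I * (l : ℂ)
        * ((t + τ : ℝ) : ℂ) / T))
        = (starRingEnd ℂ) (X l)
          * Complex.exp (-(2 * (Real.pi : ℂ) * Complex.I * (l : ℂ) * ((t + τ : ℝ) : ℂ) / T)) := by
      rw [map_mul, ← Complex.exp_conj]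
      congr 1
      simp only [map_div₀, map_mul, map_neg, Complex.conj_I, Complex.conj_ofReal,
        map_intCast, map_ofNat]
      push_cast
      ring
    rw [hc1, hc2]
    have hexp : Complex.exp (2 * (Real.pi:ℂ) * Complex.I * (k:ℂ) * (t:ℂ) / T)
        * Complex.exp (-(2 * (Real.pi : ℂ) * Complex.I * (l : ℂ) * ((t + τ : ℝ) : ℂ) / T))
        = Complex.exp (-(2 * (Real.pi : ℂ) * Complex.I * (l : ℂ) * (τ : ℂ) / T))
          * Complex.exp (2 * (Real.pi:ℂ) * Complex.I * (((k - l : ℤ)):ℂ) * (t:ℂ) / T) := by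
      rw [← Complex.exp_add, ← Complex.exp_add]
      congr 1
      push_cast
      field_simp
      try ring
      try tauto
    linear_combination (1/(N:ℂ)) * (1/(N:ℂ)) * X k * (starRingEnd ℂ) (X l) * hexp
  have hcont : ∀ l ∈ S, ∀ k : ℤ, IntervalIntegrable
      (fun t : ℝ => (1/(N:ℂ)) * (1/(N:ℂ)) * (X k * (starRingEnd ℂ) (X l)
        * Complex.exp (-(2 * (Real.pi : ℂ) * Complex.I * (l : ℂ) * (τ : ℂ) / T)))
        * Complex.exp (2 * (Real.pi:ℂ) * Complex.I * (((k - l : ℤ)):ℂ) * (t:ℂ) / T))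
      MeasureTheory.volume 0 T := by
    intro l _ k
    apply Continuous.intervalIntegrable
    fun_prop
  have hint : (∫ t in (0 : ℝ)..T, f t * (starRingEnd ℂ) (f (t + τ)))
      = ∑ k ∈ S, ∑ l ∈ S,
          (1/(N:ℂ)) * (1/(N:ℂ)) * (X k * (starRingEnd ℂ) (X l)
            * Complex.exp (-(2 * (Real.pi : ℂ) * Complex.I * (l : ℂ) * (τ : ℂ) / T)))
          * (if k - l = 0 then (T:ℂ) else 0) := by
    rw [intervalIntegral.integral_congr (g := fun t => ∑ k ∈ S, ∑ l ∈ S,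
          (1/(N:ℂ)) * (1/(N:ℂ)) * (X k * (starRingEnd ℂ) (X l)
            * Complex.exp (-(2 * (Real.pi : ℂ) * Complex.I * (l : ℂ) * (τ : ℂ) / T)))
          * Complex.exp (2 * (Real.pi:ℂ) * Complex.I * (((k - l : ℤ)):ℂ) * (t:ℂ) / T))
      (fun t _ => hptwise t)]
    rw [intervalIntegral.integral_finset_sum (fun k _ => by
      apply Continuous.intervalIntegrable
      apply continuous_finset_sum
      intro l _
      fun_prop)]
    refine Finset.sum_congr rfl fun k _ => ?_
    rw [intervalIntegral.integral_finset_sum (fun l hl => hcont l hl k)]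
    refine Finset.sum_congr rfl fun l _ => ?_
    rw [intervalIntegral.integral_const_mul, aux_int_exp T hT (k - l)]
  rw [hint]
  have hdiag : ∀ k ∈ S, (∑ l ∈ S,
      (1/(N:ℂ)) * (1/(N:ℂ)) * (X k * (starRingEnd ℂ) (X l)
        * Complex.exp (-(2 * (Real.pi : ℂ) * Complex.I * (l : ℂ) * (τ : ℂ) / T)))
      * (if k - l = 0 then (T:ℂ) else 0))
      = (1/(N:ℂ)) * (1/(N:ℂ)) * ((N:ℂ)
        * Complex.exp (-(2 * (Real.pi : ℂ) * Complex.I * (k : ℂ) * (τ : ℂ) / T))) * T := by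
    intro k hk
    rw [Finset.sum_eq_single_of_mem k hk]
    · rw [if_pos (by omega), hXmod k]
    · intro l _ hne
      rw [if_neg (by omega), mul_zero]
  rw [Finset.sum_congr rfl hdiag, Finset.mul_sum, Finset.mul_sum]
  refine Finset.sum_congr rfl fun k _ => ?_
  field_simp

lemma aux_shift_sum (N : ℕ) (a : ℕ → ℂ) (ha : ∀ m, a (m + N) = a m) (n : ℕ) :
    ∑ d ∈ Finset.range N, a (n + d) = ∑ m ∈ Finset.range N, a m := by
  induction n with
  | zero => simp
  | succ n ih =>
    rw [← ih]
    have h1 : ∑ d ∈ Finset.range (N+1), a (n + d)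
        = a (n + N) + ∑ d ∈ Finset.range N, a (n + d) := by
      rw [Finset.sum_range_succ]; ring
    have h2 : ∑ d ∈ Finset.range (N+1), a (n + d)
        = a n + ∑ d ∈ Finset.range N, a (n + (d+1)) := by
      rw [Finset.sum_range_succ']; simp [add_comm]
    have h3 : ∀ d, a (n + (d+1)) = a (n + 1 + d) := by
      intro d; congr 1; omega
    simp_rw [h3] at h2
    have := h2.symm.trans h1
    rw [ha] at this
    exact add_left_cancel this

lemma aux_geom (N : ℕ) (z : ℂ) (hz : z ^ N = 1) :
    ∑ n ∈ Finset.range N, z ^ n = if z = 1 then (N:ℂ) else 0 := by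
  rcases eq_or_ne z 1 with h | h
  · simp [h]
  · rw [if_neg h, geom_sum_eq h, hz, sub_self, zero_div]

lemma aux_zeta_ne_one (N : ℕ) (hN : N.Prime) (u : ℤ) (hu : Int.gcd u (N : ℤ) = 1)
    (d : ℕ) (hd1 : 0 < d) (hd2 : d < N) :
    Complex.exp ((d:ℂ) * (-(2 * (Real.pi:ℂ) * (u:ℂ) / N) * Complex.I)) ≠ 1 := by
  intro hcon
  rw [Complex.exp_eq_one_iff] at hcon
  obtain ⟨m, hm⟩ := hcon
  have hN0 : (N:ℂ) ≠ 0 := by exact_mod_cast hN.pos.ne'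
  have hπI : (2 * (Real.pi:ℂ) * Complex.I) ≠ 0 := by
    simp [Real.pi_ne_zero, Complex.I_ne_zero, Complex.ofReal_ne_zero]
  have h2 : ((u * d : ℤ) : ℂ) * (2 * (Real.pi:ℂ) * Complex.I)
      = ((-(m * N) : ℤ) : ℂ) * (2 * (Real.pi:ℂ) * Complex.I) := by
    push_cast
    field_simp at hm
    linear_combination -(2 * (Real.pi:ℂ) * Complex.I) * hm
  have h3 : (u * d : ℤ) = -(m * N) := by
    exact_mod_cast mul_right_cancel₀ hπI h2
  have hdvd : (N : ℤ) ∣ u * d := ⟨-m, by linarith⟩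
  have hdvd2 : (N : ℤ) ∣ (d : ℤ) := by
    have hcop : IsCoprime (N : ℤ) u := by
      rw [Int.isCoprime_iff_gcd_eq_one, Int.gcd_comm]; exact hu
    exact hcop.dvd_of_dvd_mul_left hdvd
  have : (N : ℕ) ∣ d := by exact_mod_cast hdvd2
  exact absurd (Nat.le_of_dvd hd1 this) (by omega)

lemma aux_X (N N₀ : ℕ) (hN : N.Prime) (hN₀ : N = 2*N₀+1) (u k : ℤ)
    (hu : Int.gcd u (N:ℤ) = 1) :
    (∑ n ∈ Finset.range N,
      Complex.exp (-((Real.pi : ℂ) * u * (n : ℂ) * ((n : ℂ) + 1) / N) * Complex.I)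
        * Complex.exp (-(2 * (Real.pi : ℂ) * Complex.I * k * n / N)))
    * (starRingEnd ℂ) (∑ n ∈ Finset.range N,
      Complex.exp (-((Real.pi : ℂ) * u * (n : ℂ) * ((n : ℂ) + 1) / N) * Complex.I)
        * Complex.exp (-(2 * (Real.pi : ℂ) * Complex.I * k * n / N))) = (N : ℂ) := by
  have hNpos : 0 < N := hN.pos
  have hN0 : (N:ℂ) ≠ 0 := by exact_mod_cast hNpos.ne'
  set c : ℕ → ℂ := fun n =>
    -((Real.pi : ℂ) * u * (n : ℂ) * ((n : ℂ) + 1) / N) * Complex.I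
      + -(2 * (Real.pi : ℂ) * Complex.I * k * n / N) with hc
  set a : ℕ → ℂ := fun n => Complex.exp (c n) with hadef
  have hsum : (∑ n ∈ Finset.range N,
      Complex.exp (-((Real.pi : ℂ) * u * (n : ℂ) * ((n : ℂ) + 1) / N) * Complex.I)
        * Complex.exp (-(2 * (Real.pi : ℂ) * Complex.I * k * n / N)))
      = ∑ n ∈ Finset.range N, a n := by
    refine Finset.sum_congr rfl fun n _ => ?_
    simp only [hadef, hc]
    rw [← Complex.exp_add]
  -- periodicity
  have hper : ∀ m : ℕ, a (m + N) = a m := by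
    intro m
    have hkey : c (m + N) = c m + ((-(u * ((m:ℤ) + N₀ + 1)) - k : ℤ) : ℂ)
        * (2 * (Real.pi:ℂ) * Complex.I) := by
      have hden : ((2*N₀+1 : ℕ) : ℂ) ≠ 0 := Nat.cast_ne_zero.mpr (by omega)
      push_cast at hden
      rw [hc]
      simp only
      push_cast [hN₀]
      field_simp [hden]
      ring
    rw [hadef]
    simp only
    rw [hkey, Complex.exp_add, Complex.exp_int_mul_two_pi_mul_I, mul_one]
  -- conjugate
  have hconj : ∀ n : ℕ, (starRingEnd ℂ) (a n) = Complex.exp (-(c n)) := by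
    intro n
    rw [hadef]
    simp only
    rw [← Complex.exp_conj]
    congr 1
    rw [hc]
    simp only [map_add, map_neg, map_mul, map_div₀, Complex.conj_I, Complex.conj_ofReal,
      map_intCast, map_natCast, map_ofNat, map_one]
    ring
  rw [hsum, mul_comm, map_sum]
  simp_rw [hconj]
  rw [Finset.sum_mul]
  have hshift : ∀ n ∈ Finset.range N,
      Complex.exp (-(c n)) * ∑ m ∈ Finset.range N, a m
        = ∑ d ∈ Finset.range N,
            Complex.exp ((d:ℂ) * (-(2 * (Real.pi:ℂ) * (u:ℂ) / N) * Complex.I)) ^ n * a d := by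
    intro n _
    rw [← aux_shift_sum N a hper n, Finset.mul_sum]
    refine Finset.sum_congr rfl fun d _ => ?_
    rw [hadef]
    simp only
    rw [← Complex.exp_add, ← Complex.exp_nat_mul, ← Complex.exp_add]
    congr 1
    rw [hc]
    simp only
    push_cast
    field_simp
    ring
  rw [Finset.sum_congr rfl hshift, Finset.sum_comm]
  have hgeom : ∀ d ∈ Finset.range N,
      (∑ n ∈ Finset.range N,
        Complex.exp ((d:ℂ) * (-(2 * (Real.pi:ℂ) * (u:ℂ) / N) * Complex.I)) ^ n * a d)
      = (if d = 0 then (N:ℂ) else 0) := by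
    intro d hd
    rw [← Finset.sum_mul]
    have hzN : Complex.exp ((d:ℂ) * (-(2 * (Real.pi:ℂ) * (u:ℂ) / N) * Complex.I)) ^ N = 1 := by
      rw [← Complex.exp_nat_mul]
      have harg : (N:ℂ) * ((d:ℂ) * (-(2 * (Real.pi:ℂ) * (u:ℂ) / N) * Complex.I))
          = ((-(u * d) : ℤ) : ℂ) * (2 * (Real.pi:ℂ) * Complex.I) := by
        push_cast
        field_simp
      rw [harg, Complex.exp_int_mul_two_pi_mul_I]
    rw [aux_geom N _ hzN]
    rcases eq_or_ne d 0 with h0 | h0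
    · subst h0
      have : ((0:ℕ):ℂ) * (-(2 * (Real.pi:ℂ) * (u:ℂ) / N) * Complex.I) = 0 := by simp
      rw [this, Complex.exp_zero, if_pos rfl, if_pos rfl]
      have ha0 : a 0 = 1 := by
        rw [hadef, hc]; simp
      rw [ha0, mul_one]
    · rw [if_neg h0, if_neg (aux_zeta_ne_one N hN u hu d (Nat.pos_of_ne_zero h0)
        (Finset.mem_range.mp hd)), zero_mul]
  rw [Finset.sum_congr rfl hgeom, Finset.sum_ite_eq' (Finset.range N) 0 (fun _ => (N:ℂ))]
  rw [if_pos (Finset.mem_range.mpr hNpos)]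

lemma aux_dirichlet (N N₀ : ℕ) (hNpos : 0 < N) (hN₀ : N = 2*N₀+1) (T τ : ℝ) (hT : 0 < T) :
    ((1 / (N : ℂ)) * ∑ k ∈ Finset.Icc (-(N₀ : ℤ)) (N₀ : ℤ),
        Complex.exp (-(2 * (Real.pi : ℂ) * Complex.I * (k : ℂ) * (τ : ℂ) / T)))
      = if ∃ m : ℤ, τ = m * T then 1
        else ((Real.sin (Real.pi * N * τ / T) / (N * Real.sin (Real.pi * τ / T)) : ℝ) : ℂ) := by
  have hT0 : (T:ℝ) ≠ 0 := hT.ne'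
  have hT0c : (T:ℂ) ≠ 0 := by exact_mod_cast hT0
  have hN0 : (N:ℂ) ≠ 0 := by exact_mod_cast hNpos.ne'
  have hπ : Real.pi ≠ 0 := Real.pi_ne_zero
  by_cases hex : ∃ m : ℤ, τ = m * T
  · rw [if_pos hex]
    obtain ⟨m, rfl⟩ := hex
    have hterm : ∀ k ∈ Finset.Icc (-(N₀ : ℤ)) (N₀ : ℤ),
        Complex.exp (-(2 * (Real.pi : ℂ) * Complex.I * (k : ℂ) * ((m * T : ℝ) : ℂ) / T)) = 1 := by
      intro k _
      have : -(2 * (Real.pi : ℂ) * Complex.I * (k : ℂ) * ((m * T : ℝ) : ℂ) / T)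
          = ((-(k*m) : ℤ) : ℂ) * (2 * (Real.pi:ℂ) * Complex.I) := by
        push_cast; field_simp
      rw [this, Complex.exp_int_mul_two_pi_mul_I]
    rw [Finset.sum_congr rfl hterm, Finset.sum_const, Int.card_Icc]
    have hcard : ((N₀:ℤ) + 1 - -(N₀:ℤ)).toNat = N := by omega
    rw [hcard]
    simp [hN0]
  · rw [if_neg hex]
    set x : ℝ := Real.pi * τ / T with hx
    set w : ℂ := Complex.exp (-(x:ℂ) * Complex.I) with hw
    have hw0 : w ≠ 0 := Complex.exp_ne_zero _
    have hz1 : w^2 ≠ 1 := by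
      rw [hw, ← Complex.exp_nat_mul]
      intro hcon
      rw [Complex.exp_eq_one_iff] at hcon
      obtain ⟨n, hn⟩ := hcon
      have h2 : ((-(2*x) : ℝ):ℂ) * Complex.I = (((2:ℝ)*Real.pi*n : ℝ):ℂ) * Complex.I := by
        push_cast; push_cast at hn; linear_combination hn
      have h3 : (-(2*x) : ℝ) = 2*Real.pi*n := by
        exact_mod_cast mul_right_cancel₀ Complex.I_ne_zero h2
      apply hex
      refine ⟨-n, ?_⟩
      rw [hx] at h3
      field_simp at h3
      push_cast
      have h4 : 2 * Real.pi * τ = 2 * Real.pi * (-(n:ℝ) * T) := by linear_combination (-2*Real.pi) * h3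
      have := mul_left_cancel₀ (by positivity : (2*Real.pi) ≠ 0) h4
      linarith
    set z : ℂ := w^2 with hzdef
    have hz0 : z ≠ 0 := pow_ne_zero _ hw0
    have hz2 : z = Complex.exp ((2:ℕ) * (-(x:ℂ) * Complex.I)) := by
      rw [hzdef, hw, Complex.exp_nat_mul]
    have hterm : ∀ k ∈ Finset.Icc (-(N₀ : ℤ)) (N₀ : ℤ),
        Complex.exp (-(2 * (Real.pi : ℂ) * Complex.I * (k : ℂ) * (τ : ℂ) / T)) = z ^ (k:ℤ) := by
      intro k _
      rw [hz2, ← Complex.exp_int_mul]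
      congr 1
      rw [hx]
      push_cast
      field_simp
      try ring
      try tauto
    rw [Finset.sum_congr rfl hterm]
    have hmap : Finset.Icc (-(N₀:ℤ)) (N₀:ℤ)
        = Finset.map ⟨fun n : ℕ => (n:ℤ) - N₀, fun a b h => by simpa using h⟩ (Finset.range N) := by
      ext j
      simp only [Finset.mem_Icc, Finset.mem_map, Finset.mem_range, Function.Embedding.coeFn_mk]
      constructor
      · intro h; exact ⟨(j + N₀).toNat, by omega, show (((j + N₀).toNat : ℕ) : ℤ) - N₀ = j by omega⟩
      · rintro ⟨a, ha, rfl⟩; show -(N₀:ℤ) ≤ (a:ℤ) - N₀ ∧ (a:ℤ) - N₀ ≤ N₀; omega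
    rw [hmap, Finset.sum_map]
    show 1 / (N:ℂ) * ∑ a ∈ Finset.range N, z ^ ((a:ℤ) - (N₀:ℤ)) = _
    have hsplit : ∀ a : ℕ, z ^ ((a:ℤ) - (N₀:ℤ)) = z ^ a / z ^ N₀ := by
      intro a
      rw [zpow_sub₀ hz0, zpow_natCast, zpow_natCast]
    simp_rw [hsplit]
    rw [← Finset.sum_div, geom_sum_eq hz1]
    -- sine identities
    have hsin1 : ((Real.sin (Real.pi * N * τ / T) : ℝ) : ℂ) = (w^N - (w^N)⁻¹) * Complex.I / 2 := by
      have e1 : w^N = Complex.exp (-(((Real.pi * N * τ / T : ℝ)) : ℂ) * Complex.I) := by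
        rw [hw, ← Complex.exp_nat_mul]; congr 1; rw [hx]; push_cast; field_simp
        try ring
        try tauto
      have e2 : (w^N)⁻¹ = Complex.exp ((((Real.pi * N * τ / T : ℝ)) : ℂ) * Complex.I) := by
        rw [e1, ← Complex.exp_neg]; congr 1; ring
      have hdef : Complex.sin (((Real.pi * N * τ / T : ℝ)) : ℂ)
          = (Complex.exp (-(((Real.pi * N * τ / T : ℝ)) : ℂ) * Complex.I)
            - Complex.exp ((((Real.pi * N * τ / T : ℝ)) : ℂ) * Complex.I)) * Complex.I / 2 := rfl
      rw [Complex.ofReal_sin, hdef, ← e1, ← e2]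
    have hsin2 : ((Real.sin (Real.pi * τ / T) : ℝ) : ℂ) = (w - w⁻¹) * Complex.I / 2 := by
      have e1 : w = Complex.exp (-(((Real.pi * τ / T : ℝ)) : ℂ) * Complex.I) := by
        rw [hw, hx]
      have e2 : w⁻¹ = Complex.exp ((((Real.pi * τ / T : ℝ)) : ℂ) * Complex.I) := by
        rw [e1, ← Complex.exp_neg]; congr 1; ring
      have hdef : Complex.sin (((Real.pi * τ / T : ℝ)) : ℂ)
          = (Complex.exp (-(((Real.pi * τ / T : ℝ)) : ℂ) * Complex.I)
            - Complex.exp ((((Real.pi * τ / T : ℝ)) : ℂ) * Complex.I)) * Complex.I / 2 := rfl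
      rw [Complex.ofReal_sin, hdef, ← e1, ← e2]
    rw [Complex.ofReal_div, Complex.ofReal_mul, Complex.ofReal_natCast, hsin1, hsin2]
    -- final algebra
    have hww : w - w⁻¹ ≠ 0 := by
      intro h
      apply hz1
      have hw' : w = w⁻¹ := sub_eq_zero.mp h
      rw [hzdef, sq]
      nth_rewrite 2 [hw']
      exact mul_inv_cancel₀ hw0
    have hzm1 : z - 1 ≠ 0 := sub_ne_zero.mpr hz1
    set B : ℂ := w ^ N₀ with hB
    have hB0 : B ≠ 0 := pow_ne_zero _ hw0
    have hzN : z ^ N = (B^2*w)^2 := by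
      rw [hzdef, hN₀, hB]; ring
    have hzN₀ : z ^ N₀ = B^2 := by
      rw [hzdef, hB]; ring
    have hwN : w ^ N = B^2 * w := by
      rw [hN₀, hB]; ring
    rw [hzN, hzN₀, hwN]
    have hBw : B^2*w ≠ 0 := mul_ne_zero (pow_ne_zero _ hB0) hw0
    rw [hzdef] at hzm1 ⊢
    have r1 : B^2*w - (B^2*w)⁻¹ = ((B^2*w)^2 - 1)/(B^2*w) := by
      field_simp
    have r2 : w - w⁻¹ = (w^2 - 1)/w := by
      field_simp
    rw [r1, r2]
    field_simp [hN0, hw0, hB0, hzm1, hBw, Complex.I_ne_zero]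

/-- The continuous autocorrelation of the OFDM-modulated Zadoff–Chu signal equals the
Dirichlet kernel. -/
theorem zc_ofdm_autocorr (N : ℕ) (hN : N.Prime) (hodd : Odd N) (u : ℤ)
    (hu : Int.gcd u (N : ℤ) = 1) (T : ℝ) (hT : 0 < T) (N₀ : ℕ) (hN₀ : N = 2 * N₀ + 1)
    (X : ℤ → ℂ)
    (hX : ∀ k : ℤ, X k = ∑ n ∈ Finset.range N,
      Complex.exp (-((Real.pi : ℂ) * u * (n : ℂ) * ((n : ℂ) + 1) / N) * Complex.I)
        * Complex.exp (-(2 * (Real.pi : ℂ) * Complex.I * k * n / N)))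
    (f : ℝ → ℂ)
    (hf : ∀ t : ℝ, f t = (1 / (N : ℂ)) * ∑ k ∈ Finset.Icc (-(N₀ : ℤ)) (N₀ : ℤ),
      X k * Complex.exp (2 * (Real.pi : ℂ) * Complex.I * (k : ℂ) * (t : ℂ) / T))
    (τ : ℝ) :
    (1 / (T : ℂ)) * (∫ t in (0 : ℝ)..T, f t * (starRingEnd ℂ) (f (t + τ)))
        = (1 / (N : ℂ)) * ∑ k ∈ Finset.Icc (-(N₀ : ℤ)) (N₀ : ℤ),
            Complex.exp (-(2 * (Real.pi : ℂ) * Complex.I * (k : ℂ) * (τ : ℂ) / T))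
      ∧ ((1 / (N : ℂ)) * ∑ k ∈ Finset.Icc (-(N₀ : ℤ)) (N₀ : ℤ),
            Complex.exp (-(2 * (Real.pi : ℂ) * Complex.I * (k : ℂ) * (τ : ℂ) / T)))
        = if ∃ m : ℤ, τ = m * T then 1
          else ((Real.sin (Real.pi * N * τ / T) / (N * Real.sin (Real.pi * τ / T)) : ℝ) : ℂ) := by
  have hNpos : 0 < N := hN.pos
  have hXmod : ∀ k : ℤ, X k * (starRingEnd ℂ) (X k) = (N:ℂ) := by
    intro k
    rw [hX k]
    exact aux_X N N₀ hN hN₀ u k hu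
  exact ⟨aux_corr N N₀ hNpos T hT X hXmod f hf τ, aux_dirichlet N N₀ hNpos hN₀ T τ hT⟩
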